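/- arXiv:1712.01781 — 4 statements merged into one kernel-verified Lean document; each statement's English description precedes it below -/
import Mathlib

section
/- For a prime n and a subset A of Z_n with |A| = a, the number of ordered triples (i, j, k) with i, j, k in Z_n forming an arithmetic progression (i.e., i + k = 2j) such that either all of i, j, k lie in A or none of them lies in A equals n^2 - 3*a*n + 3*a^2. -/
/-- For a prime n (odd) and a subset A of Z_n with |A| = a, the number of
ordered triples (i,j,k) in Z_n forming an arithmetic progression (i + k = 2j) that are
monochromatic with respect to A (all in A or all outside A) equals n^2 - 3an + 3a^2. -/
theorem stmt0 (n : ℕ) [Fact n.Prime] (hn : Odd n) (A : Finset (ZMod n)) (a : ℕ)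
    (ha : A.card = a) :
    ((Finset.univ.filter (fun t : ZMod n × ZMod n × ZMod n =>
        t.1 + t.2.2 = 2 * t.2.1 ∧
        ((t.1 ∈ A ∧ t.2.1 ∈ A ∧ t.2.2 ∈ A) ∨
         (t.1 ∉ A ∧ t.2.1 ∉ A ∧ t.2.2 ∉ A)))).card : ℤ)
      = (n : ℤ)^2 - 3 * a * n + 3 * a^2 := by
  have hp := (Fact.out : n.Prime)
  haveI : NeZero n := ⟨hp.ne_zero⟩
  have h2 : (2 : ZMod n) ≠ 0 := by
    intro h
    have hdvd : (n : ℕ) ∣ 2 := by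
      have := (ZMod.natCast_eq_zero_iff 2 n).mp (by exact_mod_cast h)
      exact this
    have hn2 : n = 2 := (Nat.prime_dvd_prime_iff_eq hp Nat.prime_two).mp hdvd
    rw [hn2] at hn
    exact absurd hn (by decide)
  set u : ZMod n := (2 : ZMod n)⁻¹ with hudef
  have hu : u * 2 = 1 := inv_mul_cancel₀ h2
  have hu0 : u ≠ 0 := inv_ne_zero h2
  have key : ∀ i j k : ZMod n, (i + k = 2 * j) ↔ (j = (i + k) * u) := by
    intro i j k
    constructor
    · intro h; rw [h, mul_comm 2 j, mul_assoc, mul_comm 2 u, hu, mul_one]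
    · intro h
      rw [h]
      have : 2 * ((i + k) * u) = (i + k) * (u * 2) := by ring
      rw [this, hu, mul_one]
  set x : ZMod n → ℤ := fun i => if i ∈ A then 1 else 0 with hxdef
  have hxsum : ∑ i : ZMod n, x i = (a : ℤ) := by
    simp [hxdef, Finset.sum_ite_mem, ha]
  have hshift : ∀ (f : ZMod n → ℤ) (c : ZMod n), ∑ k, f ((c + k) * u) = ∑ k, f k := by
    intro f c
    exact Fintype.sum_bijective _ ((Equiv.addLeft c).trans (Equiv.mulRight₀ u hu0)).bijective
      _ _ (fun k => rfl)
  have hcardu : (Finset.univ : Finset (ZMod n)).card = n := by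
    simp [ZMod.card]
  rw [Finset.card_filter]
  push_cast
  rw [Fintype.sum_prod_type]
  have step1 : ∀ i : ZMod n, (∑ jk : ZMod n × ZMod n,
      (if (i + jk.2 = 2 * jk.1 ∧
        ((i ∈ A ∧ jk.1 ∈ A ∧ jk.2 ∈ A) ∨ (i ∉ A ∧ jk.1 ∉ A ∧ jk.2 ∉ A))) then (1:ℤ) else 0))
      = ∑ k : ZMod n, (1 - x i - x ((i+k)*u) - x k + x i * x ((i+k)*u) + x i * x k
          + x ((i+k)*u) * x k) := by
    intro i
    rw [Fintype.sum_prod_type]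
    rw [Finset.sum_comm]
    refine Finset.sum_congr rfl (fun k _ => ?_)
    have hpt : ∀ j : ZMod n, (if (i + k = 2 * j ∧
        ((i ∈ A ∧ j ∈ A ∧ k ∈ A) ∨ (i ∉ A ∧ j ∉ A ∧ k ∉ A))) then (1:ℤ) else 0)
        = if j = (i+k)*u then
            (if ((i ∈ A ∧ j ∈ A ∧ k ∈ A) ∨ (i ∉ A ∧ j ∉ A ∧ k ∉ A)) then (1:ℤ) else 0)
          else 0 := by
      intro j
      by_cases hj : j = (i + k) * u
      · subst hj
        have h1 : i + k = 2 * ((i + k) * u) := (key i _ k).mpr rfl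
        rw [if_congr (and_iff_right h1) rfl rfl]
        simp
      · rw [if_neg hj, if_neg (fun hc => hj ((key i j k).mp hc.1))]
    rw [Finset.sum_congr rfl (fun j _ => hpt j), Finset.sum_ite_eq' Finset.univ ((i+k)*u)]
    simp only [Finset.mem_univ, if_true]
    by_cases hi : i ∈ A <;> by_cases hm : (i+k)*u ∈ A <;> by_cases hk : k ∈ A <;>
      simp [hxdef, hi, hm, hk]
  rw [Finset.sum_congr rfl (fun i _ => step1 i)]
  have e2 : ∀ c : ZMod n, ∑ k : ZMod n, x ((c + k) * u) = (a : ℤ) := by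
    intro c
    rw [hshift (fun m => x m) c]
    exact hxsum
  have split : ∀ i : ZMod n, (∑ k : ZMod n, (1 - x i - x ((i+k)*u) - x k
        + x i * x ((i+k)*u) + x i * x k + x ((i+k)*u) * x k))
      = (n : ℤ) - n * x i - a - a + x i * a + x i * a + ∑ k, x ((i+k)*u) * x k := by
    intro i
    rw [Finset.sum_add_distrib, Finset.sum_add_distrib, Finset.sum_add_distrib,
      Finset.sum_sub_distrib, Finset.sum_sub_distrib, Finset.sum_sub_distrib,
      ← Finset.mul_sum, ← Finset.mul_sum, e2 i, hxsum]
    simp only [Finset.sum_const, hcardu, nsmul_eq_mul, mul_one]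
  rw [Finset.sum_congr rfl (fun i _ => split i)]
  have e3 : ∀ k : ZMod n, ∑ i : ZMod n, x ((i + k) * u) = (a : ℤ) := by
    intro k
    have : ∑ i : ZMod n, x ((i + k) * u) = ∑ i : ZMod n, x ((k + i) * u) :=
      Finset.sum_congr rfl (fun i _ => by rw [add_comm i k])
    rw [this, e2 k]
  have last : ∑ i : ZMod n, ∑ k : ZMod n, x ((i+k)*u) * x k = (a:ℤ) * a := by
    rw [Finset.sum_comm]
    have h1 : ∀ k : ZMod n, ∑ i : ZMod n, x ((i+k)*u) * x k = (a:ℤ) * x k := by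
      intro k
      rw [← Finset.sum_mul, e3 k]
    rw [Finset.sum_congr rfl (fun k _ => h1 k), ← Finset.mul_sum, hxsum]
  rw [Finset.sum_add_distrib, last]
  rw [Finset.sum_add_distrib, Finset.sum_add_distrib, Finset.sum_sub_distrib,
    Finset.sum_sub_distrib, Finset.sum_sub_distrib]
  rw [← Finset.mul_sum, ← Finset.sum_mul, hxsum]
  simp only [Finset.sum_const, hcardu, nsmul_eq_mul, mul_one]
  ring
end

section
/- For a prime n, the number of ordered pairs (x, d) in Z_n × Z_n such that the arithmetic progression (x, x+d, x+2d) is monochromatic under a two-coloring of Z_n with color classes of sizes αn and (1-α)n equals (α^3 + (1-α)^3) n^2, where αn is an integer; equivalently, writing a = αn, the count equals (a^3 + (n-a)^3)/n. -/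
/-- For an odd prime n and a two-coloring of Z_n with color classes of sizes
a = αn and n - a, the number of pairs (x,d) such that (x, x+d, x+2d) is monochromatic
equals n^2 - 3an + 3a^2; equivalently, n times the count equals a^3 + (n-a)^3. -/
theorem stmt1 (n : ℕ) [Fact n.Prime] (hn : Odd n) (A : Finset (ZMod n)) (a : ℕ)
    (ha : A.card = a) :
    ((Finset.univ.filter (fun p : ZMod n × ZMod n =>
        (p.1 ∈ A ∧ p.1 + p.2 ∈ A ∧ p.1 + 2 * p.2 ∈ A) ∨
        (p.1 ∉ A ∧ p.1 + p.2 ∉ A ∧ p.1 + 2 * p.2 ∉ A))).card : ℤ)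
        = (n : ℤ)^2 - 3 * a * n + 3 * a^2 ∧
    ((Finset.univ.filter (fun p : ZMod n × ZMod n =>
        (p.1 ∈ A ∧ p.1 + p.2 ∈ A ∧ p.1 + 2 * p.2 ∈ A) ∨
        (p.1 ∉ A ∧ p.1 + p.2 ∉ A ∧ p.1 + 2 * p.2 ∉ A))).card : ℤ) * n
        = (a : ℤ)^3 + ((n : ℤ) - a)^3 := by
  classical
  have hp : n.Prime := Fact.out
  have h2 : (2 : ZMod n) ≠ 0 := by
    intro h
    have hdvd : n ∣ 2 := by
      have : ((2 : ℕ) : ZMod n) = 0 := by exact_mod_cast h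
      exact (ZMod.natCast_eq_zero_iff 2 n).mp this
    have : n = 2 := (Nat.prime_dvd_prime_iff_eq hp Nat.prime_two).mp hdvd
    rw [this] at hn
    simp [Nat.odd_iff] at hn
  set f : ZMod n → ℤ := fun x => if x ∈ A then 1 else 0 with hf
  have hsumf : ∑ x : ZMod n, f x = (a : ℤ) := by
    rw [hf, Finset.sum_ite_mem, Finset.univ_inter]
    simp [ha]
  -- reindexing: for fixed x, sum over d of f (x + d)
  have hshift : ∀ x : ZMod n, ∑ d : ZMod n, f (x + d) = (a : ℤ) := by
    intro x
    rw [Fintype.sum_equiv (Equiv.addLeft x) (fun d => f (x + d)) f (fun d => rfl)]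
    exact hsumf
  have hshift2 : ∀ x : ZMod n, ∑ d : ZMod n, f (x + 2 * d) = (a : ℤ) := by
    intro x
    rw [Fintype.sum_equiv ((Equiv.mulLeft₀ (2 : ZMod n) h2).trans (Equiv.addLeft x))
      (fun d => f (x + 2 * d)) f (fun d => rfl)]
    exact hsumf
  have hcardZ : Fintype.card (ZMod n) = n := ZMod.card n
  have key : ((Finset.univ.filter (fun p : ZMod n × ZMod n =>
        (p.1 ∈ A ∧ p.1 + p.2 ∈ A ∧ p.1 + 2 * p.2 ∈ A) ∨
        (p.1 ∉ A ∧ p.1 + p.2 ∉ A ∧ p.1 + 2 * p.2 ∉ A))).card : ℤ)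
      = ∑ p : ZMod n × ZMod n,
          (f p.1 * f (p.1 + p.2) * f (p.1 + 2 * p.2)
            + (1 - f p.1) * (1 - f (p.1 + p.2)) * (1 - f (p.1 + 2 * p.2))) := by
    rw [Finset.card_filter]
    push_cast
    refine Finset.sum_congr rfl (fun p _ => ?_)
    by_cases h1 : p.1 ∈ A <;> by_cases hb : p.1 + p.2 ∈ A <;>
      by_cases hc : p.1 + 2 * p.2 ∈ A <;> simp [hf, h1, hb, hc]
  have expand : ∀ p : ZMod n × ZMod n,
      f p.1 * f (p.1 + p.2) * f (p.1 + 2 * p.2)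
        + (1 - f p.1) * (1 - f (p.1 + p.2)) * (1 - f (p.1 + 2 * p.2))
      = 1 - (f p.1 + f (p.1 + p.2) + f (p.1 + 2 * p.2))
          + (f p.1 * f (p.1 + p.2) + f p.1 * f (p.1 + 2 * p.2)
            + f (p.1 + p.2) * f (p.1 + 2 * p.2)) := by
    intro p; ring
  rw [Finset.sum_congr rfl (fun p _ => expand p)] at key
  -- now compute each piece
  have S0 : ∑ _p : ZMod n × ZMod n, (1 : ℤ) = (n : ℤ)^2 := by
    simp [Finset.card_univ, hcardZ]; ring
  have S1 : ∑ p : ZMod n × ZMod n, f p.1 = (n : ℤ) * a := by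
    rw [Fintype.sum_prod_type]
    have : ∀ x : ZMod n, ∑ _d : ZMod n, f x = (n : ℤ) * f x := by
      intro x
      rw [Finset.sum_const, Finset.card_univ, hcardZ, nsmul_eq_mul]
    rw [Finset.sum_congr rfl (fun x _ => this x), ← Finset.mul_sum, hsumf]
  have S2 : ∑ p : ZMod n × ZMod n, f (p.1 + p.2) = (n : ℤ) * a := by
    rw [Fintype.sum_prod_type]
    rw [Finset.sum_congr rfl (fun x _ => hshift x), Finset.sum_const,
      Finset.card_univ, hcardZ, nsmul_eq_mul]
  have S3 : ∑ p : ZMod n × ZMod n, f (p.1 + 2 * p.2) = (n : ℤ) * a := by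
    rw [Fintype.sum_prod_type]
    rw [Finset.sum_congr rfl (fun x _ => hshift2 x), Finset.sum_const,
      Finset.card_univ, hcardZ, nsmul_eq_mul]
  have Q1 : ∑ p : ZMod n × ZMod n, f p.1 * f (p.1 + p.2) = (a : ℤ)^2 := by
    rw [Fintype.sum_prod_type]
    have : ∀ x : ZMod n, ∑ d : ZMod n, f x * f (x + d) = f x * a := by
      intro x; rw [← Finset.mul_sum, hshift]
    rw [Finset.sum_congr rfl (fun x _ => this x), ← Finset.sum_mul, hsumf]
    ring
  have Q2 : ∑ p : ZMod n × ZMod n, f p.1 * f (p.1 + 2 * p.2) = (a : ℤ)^2 := by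
    rw [Fintype.sum_prod_type]
    have : ∀ x : ZMod n, ∑ d : ZMod n, f x * f (x + 2 * d) = f x * a := by
      intro x; rw [← Finset.mul_sum, hshift2]
    rw [Finset.sum_congr rfl (fun x _ => this x), ← Finset.sum_mul, hsumf]
    ring
  have Q3 : ∑ p : ZMod n × ZMod n, f (p.1 + p.2) * f (p.1 + 2 * p.2) = (a : ℤ)^2 := by
    rw [Fintype.sum_prod_type, Finset.sum_comm]
    have hinner : ∀ d : ZMod n, ∑ x : ZMod n, f (x + d) * f (x + 2 * d)
        = ∑ y : ZMod n, f y * f (y + d) := by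
      intro d
      refine Fintype.sum_equiv (Equiv.addRight d) _ _ (fun x => ?_)
      simp only [Equiv.coe_addRight]
      rw [show x + 2 * d = x + d + d by ring]
    rw [Finset.sum_congr rfl (fun d _ => hinner d), Finset.sum_comm]
    have : ∀ y : ZMod n, ∑ d : ZMod n, f y * f (y + d) = f y * a := by
      intro y; rw [← Finset.mul_sum, hshift]
    rw [Finset.sum_congr rfl (fun y _ => this y), ← Finset.sum_mul, hsumf]
    ring
  simp only [Finset.sum_add_distrib, Finset.sum_sub_distrib] at key
  rw [S0, S1, S2, S3, Q1, Q2, Q3] at key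
  constructor
  · rw [key]; ring
  · rw [key]; ring
end

section
/- Let n be an odd prime and let z : Z_n → {0,1}. Then the sum over all pairs (x,d) in Z_n × Z_n of z(x)z(x+d)z(x+2d) + (1-z(x))(1-z(x+d))(1-z(x+2d)) equals n^2 - 3n·a + 3a^2, where a = |{i : z(i) = 1}|. -/
/-- For an odd prime n and z : Z_n → {0,1}, the sum over all (x,d) of
z(x)z(x+d)z(x+2d) + (1-z(x))(1-z(x+d))(1-z(x+2d)) equals n^2 - 3na + 3a^2,
where a = |{i : z(i) = 1}|. -/
theorem stmt5 (n : ℕ) [Fact n.Prime] (hn : Odd n) (z : ZMod n → ℤ)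
    (hz : ∀ i, z i = 0 ∨ z i = 1) (a : ℕ)
    (ha : (Finset.univ.filter (fun i : ZMod n => z i = 1)).card = a) :
    (∑ p : ZMod n × ZMod n,
      (z p.1 * z (p.1 + p.2) * z (p.1 + 2 * p.2) +
        (1 - z p.1) * (1 - z (p.1 + p.2)) * (1 - z (p.1 + 2 * p.2))))
      = (n : ℤ)^2 - 3 * n * a + 3 * a^2 := by
  have hsum : ∑ i : ZMod n, z i = (a : ℤ) := by
    rw [← ha, Finset.card_filter]
    push_cast
    exact Finset.sum_congr rfl (fun i _ => by rcases hz i with h | h <;> simp [h])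
  haveI : NeZero n := ⟨(Fact.out : n.Prime).ne_zero⟩
  have h2 : (2 : ZMod n) ≠ 0 := by
    intro h
    have : n ∣ 2 := by
      have := (ZMod.natCast_eq_zero_iff 2 n).mp (by exact_mod_cast h)
      exact this
    have hle := Nat.le_of_dvd (by norm_num) this
    have h2le := (Fact.out : n.Prime).two_le
    have := Nat.odd_iff.mp hn
    omega
  have hx1 : ∀ x : ZMod n, ∑ d : ZMod n, z (x + d) = (a : ℤ) := fun x => by
    rw [← hsum]; exact Fintype.sum_equiv (Equiv.addLeft x) _ _ (fun d => rfl)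
  have hx2 : ∀ x : ZMod n, ∑ d : ZMod n, z (x + 2 * d) = (a : ℤ) := fun x => by
    rw [← hsum]
    exact Fintype.sum_equiv ((Equiv.mulLeft₀ (2 : ZMod n) h2).trans (Equiv.addLeft x)) _ _
      (fun d => rfl)
  have card : (Fintype.card (ZMod n) : ℤ) = n := by simp [ZMod.card]
  have h1 : ∑ _p : ZMod n × ZMod n, (1 : ℤ) = (n:ℤ)^2 := by
    simp [Fintype.card_prod, ZMod.card]; ring
  have hA : ∑ p : ZMod n × ZMod n, z p.1 = (n : ℤ) * a := by
    rw [Fintype.sum_prod_type]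
    simp [Finset.sum_const, ZMod.card, ← Finset.sum_mul, hsum, mul_comm]
  have hB : ∑ p : ZMod n × ZMod n, z (p.1 + p.2) = (n : ℤ) * a := by
    rw [Fintype.sum_prod_type]
    simp [hx1, ZMod.card]
  have hC : ∑ p : ZMod n × ZMod n, z (p.1 + 2 * p.2) = (n : ℤ) * a := by
    rw [Fintype.sum_prod_type]
    simp [hx2, ZMod.card]
  have hD : ∑ p : ZMod n × ZMod n, z p.1 * z (p.1 + p.2) = (a : ℤ) * a := by
    rw [Fintype.sum_prod_type]
    simp_rw [← Finset.mul_sum]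
    simp_rw [hx1]
    rw [← Finset.sum_mul, hsum]
  have hE : ∑ p : ZMod n × ZMod n, z p.1 * z (p.1 + 2 * p.2) = (a : ℤ) * a := by
    rw [Fintype.sum_prod_type]
    simp_rw [← Finset.mul_sum, hx2]
    rw [← Finset.sum_mul, hsum]
  have hF : ∑ p : ZMod n × ZMod n, z (p.1 + p.2) * z (p.1 + 2 * p.2) = (a : ℤ) * a := by
    rw [Fintype.sum_prod_type_right]
    have step : ∀ d : ZMod n, ∑ x : ZMod n, z (x + d) * z (x + 2 * d)
        = ∑ y : ZMod n, z y * z (y + d) := fun d => by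
      apply Fintype.sum_equiv (Equiv.addRight d)
      intro x
      show z (x + d) * z (x + 2 * d) = z (x + d) * z (x + d + d)
      rw [show x + d + d = x + 2 * d from by ring]
    simp_rw [step]
    rw [Finset.sum_comm]
    simp_rw [← Finset.mul_sum, hx1]
    rw [← Finset.sum_mul, hsum]
  have expand : (∑ p : ZMod n × ZMod n,
      (z p.1 * z (p.1 + p.2) * z (p.1 + 2 * p.2) +
        (1 - z p.1) * (1 - z (p.1 + p.2)) * (1 - z (p.1 + 2 * p.2))))
      = (∑ _p : ZMod n × ZMod n, (1:ℤ))
        - (∑ p : ZMod n × ZMod n, z p.1)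
        - (∑ p : ZMod n × ZMod n, z (p.1 + p.2))
        - (∑ p : ZMod n × ZMod n, z (p.1 + 2 * p.2))
        + (∑ p : ZMod n × ZMod n, z p.1 * z (p.1 + p.2))
        + (∑ p : ZMod n × ZMod n, z p.1 * z (p.1 + 2 * p.2))
        + (∑ p : ZMod n × ZMod n, z (p.1 + p.2) * z (p.1 + 2 * p.2)) := by
    have e1 : (∑ p : ZMod n × ZMod n,
        (z p.1 * z (p.1 + p.2) * z (p.1 + 2 * p.2) +
          (1 - z p.1) * (1 - z (p.1 + p.2)) * (1 - z (p.1 + 2 * p.2))))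
        = ∑ p : ZMod n × ZMod n,
          ((((((1 - z p.1) - z (p.1 + p.2)) - z (p.1 + 2 * p.2))
            + z p.1 * z (p.1 + p.2)) + z p.1 * z (p.1 + 2 * p.2))
            + z (p.1 + p.2) * z (p.1 + 2 * p.2)) :=
      Finset.sum_congr rfl (fun p _ => by ring)
    rw [e1, Finset.sum_add_distrib, Finset.sum_add_distrib, Finset.sum_add_distrib,
      Finset.sum_sub_distrib, Finset.sum_sub_distrib, Finset.sum_sub_distrib]
  rw [expand, h1, hA, hB, hC, hD, hE, hF]
  ring
end

section
/- Let n be an odd prime, k = 3, and let σ, τ : Z_n → {true, false} be truth assignments agreeing on exactly αn variables. For a clause c' consisting of 3 literals whose underlying variables form a uniformly random ordered arithmetic progression (x, x+d, x+2d) with (x,d) uniform over Z_n × Z_n, and whose 3 signs are independent uniform bits, the probability that both σ and τ NAE-satisfy c' equals 1/2 + (1/4)(α^3 + (1-α)^3). -/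
/-- A clause: an AP of variables given by (x,d) together with three sign bits. -/
def NaeSat3 (n : ℕ) (σ : ZMod n → Bool)
    (c : (ZMod n × ZMod n) × Bool × Bool × Bool) : Prop :=
  ¬ (xor (σ c.1.1) c.2.1 = xor (σ (c.1.1 + c.1.2)) c.2.2.1 ∧
     xor (σ (c.1.1 + c.1.2)) c.2.2.1 = xor (σ (c.1.1 + 2 * c.1.2)) c.2.2.2)

instance (n : ℕ) (σ : ZMod n → Bool) (c : (ZMod n × ZMod n) × Bool × Bool × Bool) :
    Decidable (NaeSat3 n σ c) := by unfold NaeSat3; infer_instance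

lemma inner_count : ∀ (s1 s2 s3 t1 t2 t3 : Bool),
    (∑ b : Bool × Bool × Bool, if (¬ (xor s1 b.1 = xor s2 b.2.1 ∧ xor s2 b.2.1 = xor s3 b.2.2) ∧
        ¬ (xor t1 b.1 = xor t2 b.2.1 ∧ xor t2 b.2.1 = xor t3 b.2.2)) then (1:ℕ) else 0)
      = if ((s1 == t1) = (s2 == t2) ∧ (s2 == t2) = (s3 == t3)) then 6 else 4 := by
  decide

lemma three_bools : ∀ (e1 e2 e3 : Bool),
    2 * (if (e1 = e2 ∧ e2 = e3) then (1:ℕ) else 0) + 1 =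
      (if e1 = e2 then 1 else 0) + ((if e2 = e3 then 1 else 0) + (if e1 = e3 then 1 else 0)) := by
  decide

/-- For an odd prime n and assignments σ, τ agreeing on exactly αn
variables, the probability (uniform over the n^2·8 clauses whose variables form an
ordered 3-term AP and whose signs are uniform bits) that both σ and τ NAE-satisfy the
clause equals 1/2 + (1/4)(α^3 + (1-α)^3). -/
theorem stmt8 (n : ℕ) [Fact n.Prime] (hn : Odd n) (σ τ : ZMod n → Bool) (α : ℝ)
    (hα : ((Finset.univ.filter (fun i : ZMod n => σ i = τ i)).card : ℝ) = α * n) :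
    ((Finset.univ.filter (fun c : (ZMod n × ZMod n) × Bool × Bool × Bool =>
        NaeSat3 n σ c ∧ NaeSat3 n τ c)).card : ℝ) / ((n : ℝ)^2 * 8)
      = 1/2 + (1/4) * (α^3 + (1 - α)^3) := by
  classical
  have hprime : n.Prime := Fact.out
  haveI : NeZero n := ⟨hprime.ne_zero⟩
  have hn0 : (n:ℝ) ≠ 0 := Nat.cast_ne_zero.mpr hprime.ne_zero
  set ε : ZMod n → Bool := fun i => σ i == τ i with hε
  set a : ℕ := (Finset.univ.filter (fun i : ZMod n => σ i = τ i)).card with ha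
  set b : ℕ := (Finset.univ.filter (fun i : ZMod n => ¬ σ i = τ i)).card with hb
  have hab : a + b = n := by
    rw [ha, hb, Finset.card_filter_add_card_filter_not, Finset.card_univ, ZMod.card]
  have h2 : (2 : ZMod n) ≠ 0 := by
    have : ((2:ℕ) : ZMod n) ≠ 0 := by
      rw [Ne, ZMod.natCast_eq_zero_iff]
      intro h
      rcases (Nat.prime_two.eq_one_or_self_of_dvd n h) with h1 | h1
      · exact hprime.one_lt.ne' h1
      · rw [h1] at hn; exact (Nat.not_odd_iff_even.mpr even_two) hn
    simpa using this
  set c : ZMod n → ZMod n → ℕ := fun u v => if ε u = ε v then 1 else 0 with hc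
  set M : ℕ := ∑ x : ZMod n, ∑ d : ZMod n,
      (if (ε x = ε (x+d) ∧ ε (x+d) = ε (x+2*d)) then 1 else 0) with hM
  -- step 1: the card equals 4n² + 2M
  have hcount : (Finset.univ.filter (fun c : (ZMod n × ZMod n) × Bool × Bool × Bool =>
      NaeSat3 n σ c ∧ NaeSat3 n τ c)).card = 4 * n^2 + 2 * M := by
    rw [Finset.card_filter, Fintype.sum_prod_type, Fintype.sum_prod_type]
    have step : ∀ x d : ZMod n,
        (∑ bb : Bool × Bool × Bool, if (NaeSat3 n σ ((x,d),bb) ∧ NaeSat3 n τ ((x,d),bb))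
          then (1:ℕ) else 0)
        = 4 + 2 * (if (ε x = ε (x+d) ∧ ε (x+d) = ε (x+2*d)) then 1 else 0) := by
      intro x d
      have := inner_count (σ x) (σ (x+d)) (σ (x+2*d)) (τ x) (τ (x+d)) (τ (x+2*d))
      simp only [NaeSat3]
      erw [this]
      by_cases h : (ε x = ε (x+d) ∧ ε (x+d) = ε (x+2*d))
      · rw [if_pos h, if_pos h]
      · rw [if_neg h, if_neg h]
    simp only [step, Finset.sum_add_distrib, Finset.sum_const, Finset.card_univ, ZMod.card,
      smul_eq_mul, ← Finset.mul_sum, ← hM]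
    ring
  -- pair-sum value
  have hSpair : (∑ u : ZMod n, ∑ v : ZMod n, c u v) = a * a + b * b := by
    have key : ∀ u v : ZMod n, c u v =
        (if ε u = true then (1:ℕ) else 0) * (if ε v = true then 1 else 0)
        + (if ε u = false then 1 else 0) * (if ε v = false then 1 else 0) := by
      intro u v; rw [hc]; cases hu : ε u <;> cases hv : ε v <;> simp [hu, hv]
    have h1 : (∑ u : ZMod n, if ε u = true then (1:ℕ) else 0) = a := by
      rw [ha, Finset.card_filter]
      refine Finset.sum_congr rfl fun u _ => ?_
      simp [hε]
    have h0 : (∑ u : ZMod n, if ε u = false then (1:ℕ) else 0) = b := by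
      rw [hb, Finset.card_filter]
      refine Finset.sum_congr rfl fun u _ => ?_
      simp [hε]
    calc (∑ u : ZMod n, ∑ v : ZMod n, c u v)
        = (∑ u : ZMod n, ∑ v : ZMod n,
            ((if ε u = true then (1:ℕ) else 0) * (if ε v = true then 1 else 0)
            + (if ε u = false then 1 else 0) * (if ε v = false then 1 else 0))) := by
          exact Finset.sum_congr rfl fun u _ => Finset.sum_congr rfl fun v _ => key u v
      _ = (∑ u : ZMod n, if ε u = true then (1:ℕ) else 0) *
            (∑ v : ZMod n, if ε v = true then (1:ℕ) else 0)
          + (∑ u : ZMod n, if ε u = false then (1:ℕ) else 0) *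
            (∑ v : ZMod n, if ε v = false then (1:ℕ) else 0) := by
          rw [Finset.sum_mul_sum, Finset.sum_mul_sum, ← Finset.sum_add_distrib]
          exact Finset.sum_congr rfl fun u _ => by rw [← Finset.sum_add_distrib]
      _ = a * a + b * b := by rw [h1, h0]
  -- reindexing lemmas
  have hS1 : (∑ x : ZMod n, ∑ d : ZMod n, c x (x+d)) = a * a + b * b := by
    rw [← hSpair]
    exact Finset.sum_congr rfl fun x _ =>
      Fintype.sum_equiv (Equiv.addLeft x) _ _ (fun d => rfl)
  have hS3 : (∑ x : ZMod n, ∑ d : ZMod n, c x (x+2*d)) = a * a + b * b := by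
    rw [← hSpair]
    exact Finset.sum_congr rfl fun x _ =>
      Fintype.sum_equiv ((Equiv.mulLeft₀ (2 : ZMod n) h2).trans (Equiv.addLeft x)) _ _
        (fun d => rfl)
  have hS2 : (∑ x : ZMod n, ∑ d : ZMod n, c (x+d) (x+2*d)) = a * a + b * b := by
    calc (∑ x : ZMod n, ∑ d : ZMod n, c (x+d) (x+2*d))
        = (∑ d : ZMod n, ∑ x : ZMod n, c (x+d) (x+2*d)) := Finset.sum_comm
      _ = (∑ d : ZMod n, ∑ u : ZMod n, c u (u+d)) := by
          refine Finset.sum_congr rfl fun d _ => ?_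
          refine Fintype.sum_equiv (Equiv.addRight d) (fun x => c (x+d) (x+2*d))
            (fun u => c u (u+d)) (fun x => ?_)
          simp only [Equiv.coe_addRight]
          rw [show x + 2*d = x + d + d from by ring]
      _ = (∑ u : ZMod n, ∑ d : ZMod n, c u (u+d)) := Finset.sum_comm
      _ = a * a + b * b := hS1
  -- the key combinatorial identity: 2M + n² = 3(a² + b²)
  have hkey : 2 * M + n^2 = 3 * (a * a + b * b) := by
    have expand : ∀ x d : ZMod n,
        2 * (if (ε x = ε (x+d) ∧ ε (x+d) = ε (x+2*d)) then (1:ℕ) else 0) + 1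
          = c x (x+d) + (c (x+d) (x+2*d) + c x (x+2*d)) :=
      fun x d => three_bools (ε x) (ε (x+d)) (ε (x+2*d))
    have lhs : 2 * M + n^2 = ∑ x : ZMod n, ∑ d : ZMod n,
        (2 * (if (ε x = ε (x+d) ∧ ε (x+d) = ε (x+2*d)) then (1:ℕ) else 0) + 1) := by
      simp only [Finset.sum_add_distrib, Finset.sum_const, Finset.card_univ, ZMod.card,
        smul_eq_mul, mul_one, ← Finset.mul_sum, ← hM]
      ring
    rw [lhs]
    simp only [expand, Finset.sum_add_distrib]
    rw [hS1, hS2, hS3]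
    ring
  -- final algebra
  rw [hcount]
  have hbR : (b:ℝ) = (1 - α) * n := by
    have := congrArg (Nat.cast : ℕ → ℝ) hab
    push_cast at this

    linarith
  have hMR : (2 * M : ℝ) + (n:ℝ)^2 = 3 * ((a:ℝ) * a + (b:ℝ) * b) := by
    exact_mod_cast congrArg (Nat.cast : ℕ → ℝ) hkey

  push_cast
  rw [div_eq_iff (by positivity)]
  nlinarith [hMR, hα, hbR, sq_nonneg ((n:ℝ))]
end
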